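/- Single-stage unbiasedness of modified G-estimation from the primitive conditions: Let H : Ω → ℝ^d be the true history, A the true treatment indicator, A* the prescribed treatment indicator, and H* : Ω → ℝ^m the observed history with σ(H*) ⊆ σ(H, A*). Let Y be integrable with E[Y | σ(H,A)] = ν(H) + A·C(H) μ-a.e. for Borel ν, C : ℝ^d → ℝ with ν(H) integrable and C bounded. Assume Condition 1: E[Y | σ(H, A, A*)] = E[Y | σ(H, A)] μ-a.e.; Condition 2: E[ν(H) | σ(H*, A*)] = E[ν(H) | σ(H*)] μ-a.e.; Condition 3: E[A·C(H) | σ(H*, A*)] = E[A | σ(H*, A*)]·E[C(H) | σ(H*, A*)] μ-a.e.; and let p : ℝ^m → ℝ be Borel with p(H*) = E[A* | σ(H*)] μ-a.e. Then for all bounded Borel λ, θ : ℝ^m → ℝ, E[ λ(H*)·(A* − p(H*))·(Y − E[A | σ(H*, A*)]·E[C(H) | σ(H*, A*)] + θ(H*)) ] = 0. -/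

import Mathlib

open MeasureTheory

section Aux

variable {Ω : Type*} [MeasurableSpace Ω] {μ : Measure Ω} [IsProbabilityMeasure μ]

/-- A measurable function bounded (pointwise) is integrable on a probability space. -/
lemma integrable_of_bdd' {f : Ω → ℝ} (hf : Measurable f) {M : ℝ} (hM : ∀ x, |f x| ≤ M) :
    Integrable f μ :=
  (memLp_top_of_bound hf.aestronglyMeasurable M (Filter.Eventually.of_forall hM)).integrable
    le_top

end Aux

/-- Single-stage unbiasedness of modified G-estimation derived from the
primitive Conditions 1–3 of the paper, with correctly specified prescription
probability model `p(H*) = P(A* = 1 | σ(H*))`. -/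
theorem modified_G_estimation_unbiased_from_primitives
    {Ω : Type*} [MeasurableSpace Ω] (μ : Measure Ω) [IsProbabilityMeasure μ]
    {d m : ℕ} (H : Ω → (Fin d → ℝ)) (hH : Measurable H)
    (A Astar : Ω → ℝ) (hA : Measurable A) (hAstar : Measurable Astar)
    (hA01 : ∀ ω, A ω = 0 ∨ A ω = 1) (hAstar01 : ∀ ω, Astar ω = 0 ∨ Astar ω = 1)
    (Hstar : Ω → (Fin m → ℝ)) (hHstar : Measurable Hstar)
    (hHstar_sub : MeasurableSpace.comap Hstar inferInstance ≤
      MeasurableSpace.comap (fun ω => (H ω, Astar ω)) inferInstance)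
    (Y : Ω → ℝ) (hY : Integrable Y μ)
    (ν C : (Fin d → ℝ) → ℝ) (hν : Measurable ν) (hC : Measurable C)
    (hνint : Integrable (fun ω => ν (H ω)) μ)
    (hCbdd : ∃ M, ∀ x, |C x| ≤ M)
    (hblip : μ[Y | MeasurableSpace.comap (fun ω => (H ω, A ω)) inferInstance]
      =ᵐ[μ] fun ω => ν (H ω) + A ω * C (H ω))
    (hcond1 : μ[Y | MeasurableSpace.comap (fun ω => (H ω, A ω, Astar ω)) inferInstance]
      =ᵐ[μ] μ[Y | MeasurableSpace.comap (fun ω => (H ω, A ω)) inferInstance])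
    (hcond2 : μ[fun ω => ν (H ω) |
          MeasurableSpace.comap (fun ω => (Hstar ω, Astar ω)) inferInstance]
      =ᵐ[μ] μ[fun ω => ν (H ω) | MeasurableSpace.comap Hstar inferInstance])
    (hcond3 : μ[fun ω => A ω * C (H ω) |
          MeasurableSpace.comap (fun ω => (Hstar ω, Astar ω)) inferInstance]
      =ᵐ[μ] fun ω =>
        (μ[A | MeasurableSpace.comap (fun ω' => (Hstar ω', Astar ω')) inferInstance]) ω
        * (μ[fun ω' => C (H ω') |
            MeasurableSpace.comap (fun ω' => (Hstar ω', Astar ω')) inferInstance]) ω)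
    (p : (Fin m → ℝ) → ℝ) (hp : Measurable p)
    (hpcorrect : (fun ω => p (Hstar ω))
      =ᵐ[μ] μ[Astar | MeasurableSpace.comap Hstar inferInstance]) :
    ∀ lam θ : (Fin m → ℝ) → ℝ, Measurable lam → Measurable θ →
      (∃ M, ∀ x, |lam x| ≤ M) → (∃ M, ∀ x, |θ x| ≤ M) →
      ∫ ω, lam (Hstar ω) * (Astar ω - p (Hstar ω))
          * (Y ω
            - (μ[A | MeasurableSpace.comap (fun ω' => (Hstar ω', Astar ω')) inferInstance]) ω
              * (μ[fun ω' => C (H ω') |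
                  MeasurableSpace.comap (fun ω' => (Hstar ω', Astar ω')) inferInstance]) ω
            + θ (Hstar ω)) ∂μ = 0 := by
  intro lam θ hlam hθ hlamBdd hθBdd
  obtain ⟨Ml, hMl⟩ := hlamBdd
  obtain ⟨Mt, hMt⟩ := hθBdd
  obtain ⟨Mc, hMc⟩ := hCbdd
  -- ambient-measurable facts (before introducing sub-σ-algebras)
  have hAbdd : ∀ ω, |A ω| ≤ 1 := by
    intro ω; rcases hA01 ω with h | h <;> simp [h]
  have hAstarbdd : ∀ ω, |Astar ω| ≤ 1 := by
    intro ω; rcases hAstar01 ω with h | h <;> simp [h]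
  have hMc' : (0:ℝ) ≤ Mc := le_trans (abs_nonneg _) (hMc 0)
  have hACint : Integrable (fun ω => A ω * C (H ω)) μ := by
    refine integrable_of_bdd' (hA.mul (hC.comp hH)) (M := 1 * Mc) ?_
    intro ω
    rw [abs_mul]
    exact mul_le_mul (hAbdd ω) (hMc _) (abs_nonneg _) zero_le_one
  have hAint : Integrable A μ := integrable_of_bdd' hA hAbdd
  have hAstarint : Integrable Astar μ := integrable_of_bdd' hAstar hAstarbdd
  have hCHint : Integrable (fun ω => C (H ω)) μ :=
    integrable_of_bdd' (hC.comp hH) (fun ω => hMc (H ω))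
  have hθHint : Integrable (fun ω => θ (Hstar ω)) μ :=
    integrable_of_bdd' (hθ.comp hHstar) (fun ω => hMt _)
  have hfmeasAmb : Measurable (fun ω => lam (Hstar ω) * (Astar ω - p (Hstar ω))) :=
    (hlam.comp hHstar).mul (hAstar.sub (hp.comp hHstar))
  -- notation for the σ-algebras
  set mG : MeasurableSpace Ω :=
    MeasurableSpace.comap (fun ω => (Hstar ω, Astar ω)) inferInstance with hmGdef
  set mH : MeasurableSpace Ω := MeasurableSpace.comap Hstar inferInstance with hmHdef
  set mHA : MeasurableSpace Ω :=
    MeasurableSpace.comap (fun ω => (H ω, A ω)) inferInstance with hmHAdef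
  set mHAA : MeasurableSpace Ω :=
    MeasurableSpace.comap (fun ω => (H ω, A ω, Astar ω)) inferInstance with hmHAAdef
  -- basic order relations
  have hGle : mG ≤ _ := (hHstar.prodMk hAstar).comap_le
  have hHle : mH ≤ _ := hHstar.comap_le
  have hHAAle : mHAA ≤ _ := (hH.prodMk (hA.prodMk hAstar)).comap_le
  -- Hstar and Astar are measurable wrt mG
  have hHstarG : Measurable[mG] Hstar :=
    measurable_fst.comp (Measurable.of_comap_le le_rfl)
  have hAstarG : Measurable[mG] Astar :=
    measurable_snd.comp (Measurable.of_comap_le le_rfl)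
  have hHstarH : Measurable[mH] Hstar := Measurable.of_comap_le le_rfl
  have hHG : mH ≤ mG := hHstarG.comap_le
  -- mG ≤ mHAA
  have hHmHAA : Measurable[mHAA] H := measurable_fst.comp (Measurable.of_comap_le le_rfl)
  have hAstarmHAA : Measurable[mHAA] Astar :=
    (measurable_snd.comp measurable_snd).comp (Measurable.of_comap_le le_rfl)
  have hHstarmHAA : Measurable[mHAA] Hstar :=
    Measurable.of_comap_le (hHstar_sub.trans ((hHmHAA.prodMk hAstarmHAA).comap_le))
  have hGHAA : mG ≤ mHAA := (hHstarmHAA.prodMk hAstarmHAA).comap_le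
  -- conditional expectations
  set EA : Ω → ℝ := μ[A | mG] with hEAdef
  set EC : Ω → ℝ := μ[fun ω => C (H ω) | mG] with hECdef
  have hECbdd : ∀ᵐ ω ∂μ, |EC ω| ≤ Mc := by
    have := ae_bdd_condExp_of_ae_bdd (μ := μ) (m := mG) (R := ⟨Mc, hMc'⟩)
      (f := fun ω => C (H ω)) (Filter.Eventually.of_forall fun ω => hMc _)
    exact this
  have hEAint : Integrable EA μ := integrable_condExp
  have hECint : Integrable EC μ := integrable_condExp
  have hEAECint : Integrable (fun ω => EA ω * EC ω) μ := by
    have := Integrable.bdd_mul (c := Mc) hEAint hECint.1 (by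
      filter_upwards [hECbdd] with ω h using by simpa [Real.norm_eq_abs] using h)
    exact this.congr (Filter.Eventually.of_forall fun ω => mul_comm _ _)
  -- the "future payoff" and instrument functions
  set X : Ω → ℝ := fun ω => Y ω - EA ω * EC ω + θ (Hstar ω) with hXdef
  have hXint : Integrable X μ := (hY.sub hEAECint).add hθHint
  set f : Ω → ℝ := fun ω => lam (Hstar ω) * (Astar ω - p (Hstar ω)) with hfdef
  -- p(H*) is a.e. bounded by 1
  have hEAstarbdd : ∀ᵐ ω ∂μ, |(μ[Astar | mH]) ω| ≤ 1 := by
    have := ae_bdd_condExp_of_ae_bdd (μ := μ) (m := mH) (R := 1)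
      (f := Astar) (Filter.Eventually.of_forall fun ω => by simpa using hAstarbdd ω)
    simpa using this
  have hpHbdd : ∀ᵐ ω ∂μ, |p (Hstar ω)| ≤ 1 := by
    filter_upwards [hpcorrect, hEAstarbdd] with ω h1 h2
    rw [h1]; exact h2
  have hfbdd : ∀ᵐ ω ∂μ, |f ω| ≤ Ml * 2 := by
    filter_upwards [hpHbdd] with ω h1
    have h2 : |Astar ω - p (Hstar ω)| ≤ 2 := by
      calc |Astar ω - p (Hstar ω)| ≤ |Astar ω| + |p (Hstar ω)| := abs_sub _ _
      _ ≤ 1 + 1 := add_le_add (hAstarbdd ω) h1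
      _ = 2 := by norm_num
    calc |f ω| = |lam (Hstar ω)| * |Astar ω - p (Hstar ω)| := abs_mul _ _
    _ ≤ Ml * 2 := mul_le_mul (hMl _) h2 (abs_nonneg _)
        (le_trans (abs_nonneg _) (hMl 0))
  have hfXint : Integrable (f * X) μ :=
    Integrable.bdd_mul (c := Ml * 2) hXint hfmeasAmb.aestronglyMeasurable (by
      filter_upwards [hfbdd] with ω h using by simpa [Real.norm_eq_abs] using h)
  have hfSM : StronglyMeasurable[mG] f :=
    ((hlam.comp hHstarG).mul (hAstarG.sub (hp.comp hHstarG))).stronglyMeasurable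
  -- Step A : E[Y | mG] = E[ν(H) | mH] + EA * EC  a.e.
  set Eν : Ω → ℝ := μ[fun ω => ν (H ω) | mH] with hEνdef
  have hYG : μ[Y | mG] =ᵐ[μ] fun ω => Eν ω + EA ω * EC ω := by
    calc μ[Y | mG] =ᵐ[μ] μ[μ[Y | mHAA] | mG] := (condExp_condExp_of_le hGHAA hHAAle).symm
    _ =ᵐ[μ] μ[μ[Y | mHA] | mG] := condExp_congr_ae hcond1
    _ =ᵐ[μ] μ[fun ω => ν (H ω) + A ω * C (H ω) | mG] := condExp_congr_ae hblip
    _ =ᵐ[μ] μ[fun ω => ν (H ω) | mG] + μ[fun ω => A ω * C (H ω) | mG] :=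
        condExp_add hνint hACint mG
    _ =ᵐ[μ] fun ω => Eν ω + EA ω * EC ω := by
        filter_upwards [hcond2, hcond3] with ω h2 h3
        simp only [Pi.add_apply]
        rw [h2, h3]
  -- Step B : E[X | mG] = Eν + θ(H*)  a.e.
  have hEAECsm : StronglyMeasurable[mG] (fun ω => EA ω * EC ω) :=
    stronglyMeasurable_condExp.mul stronglyMeasurable_condExp
  have hθHsm : StronglyMeasurable[mG] (fun ω => θ (Hstar ω)) :=
    ((hθ.comp hHstarH).stronglyMeasurable).mono hHG
  have hXG : μ[X | mG] =ᵐ[μ] fun ω => Eν ω + θ (Hstar ω) := by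
    calc μ[X | mG]
        =ᵐ[μ] μ[fun ω => Y ω - EA ω * EC ω | mG] + μ[fun ω => θ (Hstar ω) | mG] :=
          condExp_add (hY.sub hEAECint) hθHint mG
    _ =ᵐ[μ] (μ[Y | mG] - μ[fun ω => EA ω * EC ω | mG]) + μ[fun ω => θ (Hstar ω) | mG] :=
          Filter.EventuallyEq.add (condExp_sub hY hEAECint mG) Filter.EventuallyEq.rfl
    _ =ᵐ[μ] fun ω => Eν ω + θ (Hstar ω) := by
          have h1 : μ[fun ω => EA ω * EC ω | mG] = fun ω => EA ω * EC ω :=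
            condExp_of_stronglyMeasurable hGle hEAECsm hEAECint
          have h2 : μ[fun ω => θ (Hstar ω) | mG] = fun ω => θ (Hstar ω) :=
            condExp_of_stronglyMeasurable hGle hθHsm hθHint
          rw [h1, h2]
          filter_upwards [hYG] with ω hy
          simp only [Pi.add_apply, Pi.sub_apply]
          rw [hy]
          ring
  -- Step C : reduce the integral by conditioning on mG
  have hstep1 : ∫ ω, f ω * X ω ∂μ = ∫ ω, f ω * (Eν ω + θ (Hstar ω)) ∂μ := by
    have h1 : ∫ ω, (f * X) ω ∂μ = ∫ ω, (μ[f * X | mG]) ω ∂μ :=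
      (integral_condExp hGle).symm
    have h2 : μ[f * X | mG] =ᵐ[μ] fun ω => f ω * (Eν ω + θ (Hstar ω)) := by
      calc μ[f * X | mG] =ᵐ[μ] f * μ[X | mG] :=
            condExp_mul_of_stronglyMeasurable_left hfSM hfXint hXint
      _ =ᵐ[μ] fun ω => f ω * (Eν ω + θ (Hstar ω)) := by
            filter_upwards [hXG] with ω h
            simp only [Pi.mul_apply]
            rw [h]
    calc ∫ ω, f ω * X ω ∂μ = ∫ ω, (f * X) ω ∂μ := rfl
    _ = ∫ ω, (μ[f * X | mG]) ω ∂μ := h1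
    _ = ∫ ω, f ω * (Eν ω + θ (Hstar ω)) ∂μ := integral_congr_ae h2
  -- Step D : condition on mH
  set f2 : Ω → ℝ := fun ω => lam (Hstar ω) * (Eν ω + θ (Hstar ω)) with hf2def
  set Z : Ω → ℝ := fun ω => Astar ω - p (Hstar ω) with hZdef
  have hpHint : Integrable (fun ω => p (Hstar ω)) μ :=
    (integrable_condExp (f := Astar) (m := mH)).congr hpcorrect.symm
  have hZint : Integrable Z μ := hAstarint.sub hpHint
  have hrearrange : ∀ ω, f ω * (Eν ω + θ (Hstar ω)) = f2 ω * Z ω := by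
    intro ω; simp only [hfdef, hf2def, hZdef]; ring
  have hf2SM : StronglyMeasurable[mH] f2 :=
    ((hlam.comp hHstarH).stronglyMeasurable).mul
      (stronglyMeasurable_condExp.add ((hθ.comp hHstarH).stronglyMeasurable))
  have hf2Zint : Integrable (f2 * Z) μ := by
    have h0 : Integrable (fun ω => f ω * (Eν ω + θ (Hstar ω))) μ := by
      have hint : Integrable (fun ω => Eν ω + θ (Hstar ω)) μ := integrable_condExp.add hθHint
      exact Integrable.bdd_mul (c := Ml * 2) hint hfmeasAmb.aestronglyMeasurable (by
        filter_upwards [hfbdd] with ω h using by simpa [Real.norm_eq_abs] using h)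
    exact h0.congr (Filter.Eventually.of_forall fun ω => hrearrange ω)
  have hZcond : μ[Z | mH] =ᵐ[μ] 0 := by
    calc μ[Z | mH] =ᵐ[μ] μ[Astar | mH] - μ[fun ω => p (Hstar ω) | mH] :=
          condExp_sub hAstarint hpHint mH
    _ =ᵐ[μ] 0 := by
        have h1 : μ[fun ω => p (Hstar ω) | mH] =ᵐ[μ] μ[μ[Astar | mH] | mH] :=
          condExp_congr_ae hpcorrect
        have h2 : μ[μ[Astar | mH] | mH] =ᵐ[μ] μ[Astar | mH] :=
          condExp_condExp_of_le le_rfl hHle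
        filter_upwards [h1, h2] with ω hω1 hω2
        simp only [Pi.sub_apply, Pi.zero_apply]
        rw [hω1, hω2]
        ring
  have hstep2 : ∫ ω, f2 ω * Z ω ∂μ = 0 := by
    have h1 : ∫ ω, (f2 * Z) ω ∂μ = ∫ ω, (μ[f2 * Z | mH]) ω ∂μ :=
      (integral_condExp hHle).symm
    have h2 : μ[f2 * Z | mH] =ᵐ[μ] 0 := by
      calc μ[f2 * Z | mH] =ᵐ[μ] f2 * μ[Z | mH] :=
            condExp_mul_of_stronglyMeasurable_left hf2SM hf2Zint hZint
      _ =ᵐ[μ] 0 := by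
            filter_upwards [hZcond] with ω h
            simp only [Pi.mul_apply, Pi.zero_apply] at h ⊢
            rw [h]; ring
    calc ∫ ω, f2 ω * Z ω ∂μ = ∫ ω, (f2 * Z) ω ∂μ := rfl
    _ = ∫ ω, (μ[f2 * Z | mH]) ω ∂μ := h1
    _ = ∫ ω, (0 : Ω → ℝ) ω ∂μ := integral_congr_ae h2
    _ = 0 := by simp
  -- conclusion
  calc ∫ ω, lam (Hstar ω) * (Astar ω - p (Hstar ω)) * (Y ω - EA ω * EC ω + θ (Hstar ω)) ∂μ
      = ∫ ω, f ω * X ω ∂μ := rfl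
  _ = ∫ ω, f ω * (Eν ω + θ (Hstar ω)) ∂μ := hstep1
  _ = ∫ ω, f2 ω * Z ω ∂μ := integral_congr_ae (Filter.Eventually.of_forall hrearrange)
  _ = 0 := hstep2
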